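/- arXiv:1905.13340 — 2 statements merged into one kernel-verified Lean document; each statement's English description precedes it below -/
import Mathlib

section
/- Let Z_i be the BEC polarization process starting at Z_0, assume P{min(Z_i,1-Z_i) > 2^{-2^{i/24}}} ≤ C·2^{-i/4} for all i and some constant C, set n = ⌈5·log₂(1/ε)⌉ for 0 < ε < 1, and let τ = min({ j : min(Z_j, 1-Z_j) ≤ ε·2^{-n} } ∪ {n}). Then E[τ] = O(log log(1/ε)) as ε → 0. -/
open MeasureTheory
open scoped ENNReal

/-- Core complexity theorem for pruned polar codes over the BEC.  For the BEC polarization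
process `Z_i` satisfying `P{min(Z_i,1-Z_i) > 2^{-2^{i/24}}} ≤ C·2^{-i/4}` for all `i`, with
`n = ⌈5·log₂(1/ε)⌉` and stopping time
`τ = min({j : min(Z_j, 1-Z_j) ≤ ε·2^{-n}} ∪ {n})`, we have `E[τ] = O(log log (1/ε))`
as `ε → 0`. -/
theorem pruned_expected_stopping_loglog :
    ∀ C : ℝ, 0 < C → ∃ K ε₀ : ℝ, 0 < K ∧ 0 < ε₀ ∧ ε₀ < 1 ∧
      ∀ ε : ℝ, 0 < ε → ε < ε₀ →
      ∀ (Ω : Type) (mΩ : MeasurableSpace Ω) (μ : Measure Ω), IsProbabilityMeasure μ →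
      ∀ Z : ℕ → Ω → ℝ, (∀ i, Measurable (Z i)) →
      (∀ i ω, Z i ω ∈ Set.Icc (0 : ℝ) 1) →
      (∀ i ω, Z (i + 1) ω = 2 * Z i ω - (Z i ω) ^ 2 ∨ Z (i + 1) ω = (Z i ω) ^ 2) →
      (∀ i : ℕ,
        μ {ω | min (Z i ω) (1 - Z i ω) > (2 : ℝ) ^ (-(2 : ℝ) ^ ((i : ℝ) / 24))} ≤
          ENNReal.ofReal (C * 2 ^ (-(i : ℝ) / 4))) →
      ∀ τ : Ω → ℕ,
      (∀ ω, τ ω = sInf ({j | min (Z j ω) (1 - Z j ω) ≤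
          ε * 2 ^ (-(⌈5 * Real.logb 2 (1 / ε)⌉₊ : ℝ))} ∪ {⌈5 * Real.logb 2 (1 / ε)⌉₊})) →
      ∫⁻ ω, (τ ω : ℝ≥0∞) ∂μ ≤ ENNReal.ofReal (K * Real.logb 2 (Real.logb 2 (1 / ε))) := by
  intro C hC
  set M : ℝ := max 2 (6 * C) with hM
  have hM2 : (2 : ℝ) ≤ M := le_max_left _ _
  have hMC : 6 * C ≤ M := le_max_right _ _
  refine ⟨100, (2 : ℝ) ^ (-M), by norm_num, by positivity, ?_, ?_⟩
  · exact Real.rpow_lt_one_of_one_lt_of_neg (by norm_num) (by linarith)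
  intro ε hε hεlt Ω mΩ μ hμ Z hZmeas hZmem hZrec htail τ hτ
  set L : ℝ := Real.logb 2 (1 / ε) with hLdef
  -- L > M
  have hML : M < L := by
    have h1 : (2 : ℝ) ^ M < 1 / ε := by
      rw [one_div]
      calc (2 : ℝ) ^ M = ((2 : ℝ) ^ (-M))⁻¹ := by
            rw [Real.rpow_neg (by norm_num), inv_inv]
        _ < ε⁻¹ := by
            exact inv_strictAnti₀ hε hεlt
    calc M = Real.logb 2 ((2 : ℝ) ^ M) :=
          (Real.logb_rpow (by norm_num) (by norm_num)).symm
      _ < L := Real.logb_lt_logb (by norm_num) (by positivity) h1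
  have hL2 : (2 : ℝ) < L := lt_of_le_of_lt hM2 hML
  have hL1 : (1 : ℝ) ≤ L := by linarith
  have hLC : 6 * C < L := lt_of_le_of_lt hMC hML
  set n : ℕ := ⌈5 * Real.logb 2 (1 / ε)⌉₊ with hndef
  have hn6 : (n : ℝ) ≤ 6 * L := by
    have := Nat.ceil_lt_add_one (show (0:ℝ) ≤ 5 * Real.logb 2 (1/ε) by
      rw [← hLdef]; positivity)
    rw [← hLdef] at this
    have : (n : ℝ) < 5 * L + 1 := this
    linarith
  set i₀ : ℕ := ⌈24 * Real.logb 2 (7 * L)⌉₊ with hi₀def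
  have h7L : (0 : ℝ) < 7 * L := by linarith
  have hi₀ : 24 * Real.logb 2 (7 * L) ≤ (i₀ : ℝ) := Nat.le_ceil _
  have hlogb7L : Real.logb 2 (7 * L) = Real.logb 2 7 + Real.logb 2 L :=
    Real.logb_mul (by norm_num) (by linarith)
  have hlb7 : Real.logb 2 7 ≤ 3 := by
    have h8 : Real.logb 2 ((2:ℝ) ^ (3:ℝ)) = 3 := Real.logb_rpow (by norm_num) (by norm_num)
    have : Real.logb 2 7 ≤ Real.logb 2 ((2:ℝ) ^ (3:ℝ)) := by
      apply Real.logb_le_logb_of_le (by norm_num) (by norm_num)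
      rw [show ((2:ℝ) ^ (3:ℝ)) = 8 by
        rw [show (3:ℝ) = ((3:ℕ):ℝ) by norm_num, Real.rpow_natCast]; norm_num]
      norm_num
    linarith [this, h8]
  have hlbL : 1 ≤ Real.logb 2 L := by
    have : Real.logb 2 2 ≤ Real.logb 2 L :=
      Real.logb_le_logb_of_le (by norm_num) (by norm_num) hL2.le
    rwa [Real.logb_self_eq_one (by norm_num)] at this
  have hi₀' : (i₀ : ℝ) ≤ 73 + 24 * Real.logb 2 L := by
    have h1 : (i₀ : ℝ) < 24 * Real.logb 2 (7 * L) + 1 :=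
      Nat.ceil_lt_add_one (mul_nonneg (by norm_num)
        (Real.logb_nonneg (by norm_num) (by linarith)))
    rw [hlogb7L] at h1
    linarith
  -- 7L ≤ 2^(i₀/24)
  have hpow : 7 * L ≤ (2 : ℝ) ^ ((i₀ : ℝ) / 24) := by
    have h1 : Real.logb 2 (7 * L) ≤ (i₀ : ℝ) / 24 := by linarith
    calc 7 * L = (2 : ℝ) ^ Real.logb 2 (7 * L) :=
          (Real.rpow_logb (by norm_num) (by norm_num) h7L).symm
      _ ≤ (2 : ℝ) ^ ((i₀ : ℝ) / 24) :=
          Real.rpow_le_rpow_of_exponent_le (by norm_num) h1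
  -- threshold comparison
  have hεeq : ε = (2 : ℝ) ^ (-L) := by
    have h1 : L = -Real.logb 2 ε := by
      rw [hLdef, one_div, Real.logb_inv]
    rw [h1, neg_neg]
    exact (Real.rpow_logb (by norm_num) (by norm_num) hε).symm
  have hthr : (2 : ℝ) ^ (-(2 : ℝ) ^ ((i₀ : ℝ) / 24)) ≤ ε * 2 ^ (-(n : ℝ)) := by
    rw [hεeq, ← Real.rpow_add (by norm_num)]
    apply Real.rpow_le_rpow_of_exponent_le (by norm_num)
    have : L + (n : ℝ) ≤ 7 * L := by linarith
    linarith [hpow]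
  -- τ ≤ n always
  have hτn : ∀ ω, τ ω ≤ n := by
    intro ω
    rw [hτ ω]
    exact Nat.sInf_le (Set.mem_union_right _ rfl)
  -- the bad event
  have hsub : {ω | i₀ < τ ω} ⊆
      {ω | min (Z i₀ ω) (1 - Z i₀ ω) > (2 : ℝ) ^ (-(2 : ℝ) ^ ((i₀ : ℝ) / 24))} := by
    intro ω hω
    simp only [Set.mem_setOf_eq] at hω ⊢
    by_contra hcon
    push_neg at hcon
    have hmem : i₀ ∈ ({j | min (Z j ω) (1 - Z j ω) ≤
        ε * 2 ^ (-(⌈5 * Real.logb 2 (1 / ε)⌉₊ : ℝ))} ∪ {⌈5 * Real.logb 2 (1 / ε)⌉₊}) := by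
      left
      exact le_trans hcon hthr
    have := Nat.sInf_le hmem
    rw [← hτ ω] at this
    omega
  have hμtail : μ {ω | i₀ < τ ω} ≤ ENNReal.ofReal (C * 2 ^ (-(i₀ : ℝ) / 4)) :=
    (measure_mono hsub).trans (htail i₀)
  -- tail product ≤ 1
  have htail1 : (n : ℝ) * (C * 2 ^ (-(i₀ : ℝ) / 4)) ≤ 1 := by
    have hq : (2 : ℝ) ^ ((i₀ : ℝ) / 4) = ((2 : ℝ) ^ ((i₀ : ℝ) / 24)) ^ (6 : ℕ) := by
      rw [← Real.rpow_natCast ((2:ℝ) ^ ((i₀:ℝ)/24)) 6, ← Real.rpow_mul (by norm_num)]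
      norm_num
      ring_nf
    have h76 : (7 * L) ^ (6 : ℕ) ≤ (2 : ℝ) ^ ((i₀ : ℝ) / 4) := by
      rw [hq]
      exact pow_le_pow_left₀ h7L.le hpow 6
    have hL26 : L ^ 2 ≤ L ^ 6 := pow_le_pow_right₀ hL1 (by norm_num)
    have h7L6 : L ^ 6 ≤ (7 * L) ^ (6 : ℕ) := by
      have : (1:ℝ) * L ≤ 7 * L := by linarith
      calc L ^ 6 = (1 * L) ^ 6 := by ring
        _ ≤ (7 * L) ^ 6 := pow_le_pow_left₀ (by linarith) this 6
    have hnC : (n : ℝ) * C ≤ L ^ 2 := by nlinarith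
    have hkey : (n : ℝ) * C ≤ (2 : ℝ) ^ ((i₀ : ℝ) / 4) := by linarith
    have hpos : (0 : ℝ) < (2 : ℝ) ^ ((i₀ : ℝ) / 4) := by positivity
    have : (2 : ℝ) ^ (-(i₀ : ℝ) / 4) = ((2 : ℝ) ^ ((i₀ : ℝ) / 4))⁻¹ := by
      rw [← Real.rpow_neg (by norm_num)]
      ring_nf
    rw [this, ← mul_assoc, ← div_eq_mul_inv, div_le_one hpos]
    exact hkey
  -- the integral bound
  have hmain : ∫⁻ ω, (τ ω : ℝ≥0∞) ∂μ ≤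
      (i₀ : ℝ≥0∞) + (n : ℝ≥0∞) * μ {ω | i₀ < τ ω} := by
    have hpt : ∀ ω, (τ ω : ℝ≥0∞) ≤
        (i₀ : ℝ≥0∞) + Set.indicator {ω | i₀ < τ ω} (fun _ => (n : ℝ≥0∞)) ω := by
      intro ω
      by_cases h : i₀ < τ ω
      · rw [Set.indicator_of_mem (show ω ∈ {ω | i₀ < τ ω} from h)]
        calc (τ ω : ℝ≥0∞) ≤ (n : ℝ≥0∞) := by exact_mod_cast hτn ω
          _ ≤ (i₀ : ℝ≥0∞) + (n : ℝ≥0∞) := le_add_self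
      · have : τ ω ≤ i₀ := by omega
        calc (τ ω : ℝ≥0∞) ≤ (i₀ : ℝ≥0∞) := by exact_mod_cast this
          _ ≤ _ := le_self_add
    calc ∫⁻ ω, (τ ω : ℝ≥0∞) ∂μ
        ≤ ∫⁻ ω, ((i₀ : ℝ≥0∞) +
            Set.indicator {ω | i₀ < τ ω} (fun _ => (n : ℝ≥0∞)) ω) ∂μ :=
          lintegral_mono hpt
      _ = (i₀ : ℝ≥0∞) * μ Set.univ +
            ∫⁻ ω, Set.indicator {ω | i₀ < τ ω} (fun _ => (n : ℝ≥0∞)) ω ∂μ := by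
          rw [lintegral_add_left measurable_const, lintegral_const]
      _ = (i₀ : ℝ≥0∞) +
            ∫⁻ ω, Set.indicator {ω | i₀ < τ ω} (fun _ => (n : ℝ≥0∞)) ω ∂μ := by
          rw [measure_univ, mul_one]
      _ ≤ (i₀ : ℝ≥0∞) + (n : ℝ≥0∞) * μ {ω | i₀ < τ ω} :=
          add_le_add le_rfl (lintegral_indicator_const_le _ _)
  have hmain2 : ∫⁻ ω, (τ ω : ℝ≥0∞) ∂μ ≤
      ENNReal.ofReal ((i₀ : ℝ) + (n : ℝ) * (C * 2 ^ (-(i₀ : ℝ) / 4))) := by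
    refine hmain.trans ?_
    rw [ENNReal.ofReal_add (by positivity) (by positivity)]
    rw [ENNReal.ofReal_natCast]
    refine add_le_add le_rfl ?_
    calc (n : ℝ≥0∞) * μ {ω | i₀ < τ ω}
        ≤ (n : ℝ≥0∞) * ENNReal.ofReal (C * 2 ^ (-(i₀ : ℝ) / 4)) :=
          mul_le_mul_right hμtail _
      _ = ENNReal.ofReal ((n : ℝ) * (C * 2 ^ (-(i₀ : ℝ) / 4))) := by
          rw [show ((n : ℕ) : ℝ≥0∞) = ENNReal.ofReal (n : ℝ) from
            (ENNReal.ofReal_natCast n).symm,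
            ← ENNReal.ofReal_mul (by positivity)]
  refine hmain2.trans (ENNReal.ofReal_le_ofReal ?_)
  have : (i₀ : ℝ) + (n : ℝ) * (C * 2 ^ (-(i₀ : ℝ) / 4)) ≤ 74 + 24 * Real.logb 2 L := by
    linarith
  linarith
end

section
/- For all π ∈ [0,1], (1-π)/(4 - 3.627π) + h₂(1/(6·(4 - 3.627π))) < 1, where h₂(x) = -x·log₂(x) - (1-x)·log₂(1-x) is the binary entropy function. -/
/-- The binary entropy function with base-2 logarithms. -/
noncomputable def h2 (x : ℝ) : ℝ := -x * Real.logb 2 x - (1 - x) * Real.logb 2 (1 - x)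

/-- Upper bound on `logb 2 y` from a verified power inequality. -/
lemma logb_lt_of_pow_lt {y : ℝ} (p q : ℕ) (hq : 0 < q) (hy : 0 < y)
    (h : y ^ q < 2 ^ p) : Real.logb 2 y < p / q := by
  have hL : (0 : ℝ) < Real.log 2 := Real.log_pos one_lt_two
  have hlog : Real.log (y ^ q) < Real.log (2 ^ p) :=
    Real.log_lt_log (pow_pos hy q) h
  rw [Real.log_pow, Real.log_pow] at hlog
  rw [Real.logb, div_lt_div_iff₀ hL (by exact_mod_cast hq)]
  linarith

/-- Gibbs / tangent-line bound on binary entropy. -/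
lemma h2_le_tangent (x x0 : ℝ) (hx : 0 < x) (hx1 : x < 1) (h0 : 0 < x0) (h01 : x0 < 1) :
    h2 x ≤ -x * Real.logb 2 x0 - (1 - x) * Real.logb 2 (1 - x0) := by
  have hL : (0 : ℝ) < Real.log 2 := Real.log_pos one_lt_two
  have hx1' : 0 < 1 - x := by linarith
  have h01' : 0 < 1 - x0 := by linarith
  -- first Gibbs inequality
  have l1 : Real.log (x0 / x) ≤ x0 / x - 1 :=
    Real.log_le_sub_one_of_pos (div_pos h0 hx)
  have m1 := mul_le_mul_of_nonneg_left l1 hx.le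
  rw [Real.log_div h0.ne' hx.ne'] at m1
  have e1 : x * (x0 / x - 1) = x0 - x := by field_simp
  have h1 : x * (Real.log x0 - Real.log x) ≤ x0 - x := by linarith
  -- second Gibbs inequality
  have l2 : Real.log ((1 - x0) / (1 - x)) ≤ (1 - x0) / (1 - x) - 1 :=
    Real.log_le_sub_one_of_pos (div_pos h01' hx1')
  have m2 := mul_le_mul_of_nonneg_left l2 hx1'.le
  rw [Real.log_div h01'.ne' hx1'.ne'] at m2
  have e2 : (1 - x) * ((1 - x0) / (1 - x) - 1) = x - x0 := by field_simp; ring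
  have h2' : (1 - x) * (Real.log (1 - x0) - Real.log (1 - x)) ≤ x - x0 := by linarith
  have key : -x * Real.log x - (1 - x) * Real.log (1 - x) ≤
      -x * Real.log x0 - (1 - x) * Real.log (1 - x0) := by nlinarith
  have eA : -x * Real.logb 2 x - (1 - x) * Real.logb 2 (1 - x) =
      (-x * Real.log x - (1 - x) * Real.log (1 - x)) / Real.log 2 := by
    simp only [Real.logb]; ring
  have eB : -x * Real.logb 2 x0 - (1 - x) * Real.logb 2 (1 - x0) =
      (-x * Real.log x0 - (1 - x) * Real.log (1 - x0)) / Real.log 2 := by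
    simp only [Real.logb]; ring
  rw [h2, eA, eB]
  exact div_le_div_of_nonneg_right key hL.le

/-- For all `π ∈ [0,1]`, `(1-π)/(4 - 3.627π) + h₂(1/(6·(4 - 3.627π))) < 1`.
This verifies the hypothesis of the moderate-deviations lemma with parameters
`(μ', β') = (4, 1/24)` and `μ = 3.627`. -/
theorem moderate_deviation_constants : ∀ π : ℝ, π ∈ Set.Icc (0 : ℝ) 1 →
    (1 - π) / (4 - 3.627 * π) + h2 (1 / (6 * (4 - 3.627 * π))) < 1 := by
  intro π hπ
  obtain ⟨hπ0, hπ1⟩ := hπ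
  rw [show (3.627 : ℝ) = 3627 / 1000 by norm_num]
  obtain ⟨t, ht_def⟩ : ∃ t : ℝ, 4 - 3627 / 1000 * π = t := ⟨_, rfl⟩
  rw [ht_def]
  have ht1 : (373/1000 : ℝ) ≤ t := by rw [← ht_def]; nlinarith
  have ht2 : t ≤ 4 := by rw [← ht_def]; nlinarith
  have ht : (0 : ℝ) < t := by linarith
  obtain ⟨x, hx_def⟩ : ∃ x : ℝ, 1 / (6 * t) = x := ⟨_, rfl⟩
  rw [hx_def]
  have hx0 : 0 < x := by rw [← hx_def]; positivity
  have hx1 : x < 1 := by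
    rw [← hx_def, div_lt_one (by linarith)]; linarith
  -- tangent bound at x0 = 3947/10000
  have hb := h2_le_tangent x (3947 / 10000) hx0 hx1 (by norm_num) (by norm_num)
  have h1m : (1 : ℝ) - 3947 / 10000 = 6053 / 10000 := by norm_num
  rw [h1m] at hb
  -- bound the two logarithms
  have ha : Real.logb 2 (10000 / 3947) < 114 / 85 := by
    have := logb_lt_of_pow_lt (y := (10000 / 3947 : ℝ)) 114 85 (by norm_num)
      (by norm_num) (by norm_num)
    simpa using this
  have hbb : Real.logb 2 (10000 / 6053) < 176 / 243 := by
    have := logb_lt_of_pow_lt (y := (10000 / 6053 : ℝ)) 176 243 (by norm_num)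
      (by norm_num) (by norm_num)
    simpa using this
  have ia : -Real.logb 2 ((3947 : ℝ) / 10000) < 114 / 85 := by
    have e : ((3947 : ℝ) / 10000) = ((10000 : ℝ) / 3947)⁻¹ := by norm_num
    rw [e, Real.logb_inv]; linarith
  have ib : -Real.logb 2 ((6053 : ℝ) / 10000) < 176 / 243 := by
    have e : ((6053 : ℝ) / 10000) = ((10000 : ℝ) / 6053)⁻¹ := by norm_num
    rw [e, Real.logb_inv]; linarith
  -- combine with positivity of the weights x and 1-x
  have hx1' : 0 < 1 - x := by linarith
  have step : h2 x ≤ x * (114 / 85) + (1 - x) * (176 / 243) := by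
    have c1 : -x * Real.logb 2 (3947 / 10000) ≤ x * (114 / 85) := by
      have := mul_le_mul_of_nonneg_left ia.le hx0.le
      nlinarith
    have c2 : -(1 - x) * Real.logb 2 (6053 / 10000) ≤ (1 - x) * (176 / 243) := by
      have := mul_le_mul_of_nonneg_left ib.le hx1'.le
      nlinarith
    calc h2 x ≤ -x * Real.logb 2 (3947 / 10000) - (1 - x) * Real.logb 2 (6053 / 10000) := hb
      _ ≤ x * (114 / 85) + (1 - x) * (176 / 243) := by nlinarith
  -- final linear arithmetic
  have goal2 : (1 - π) / t + (x * (114 / 85) + (1 - x) * (176 / 243)) < 1 := by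
    have expand : (1 - π) / t + (x * (114 / 85) + (1 - x) * (176 / 243)) =
        ((1 - π) * 6 + 114 / 85 + 176 / 243 * (6 * t - 1)) / (6 * t) := by
      rw [← hx_def]; field_simp; ring
    rw [expand, div_lt_one (by linarith), ← ht_def]
    nlinarith
  calc (1 - π) / t + h2 x ≤ (1 - π) / t + (x * (114 / 85) + (1 - x) * (176 / 243)) := by
        linarith
    _ < 1 := goal2
end
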